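/- Every finite connected biconvex bipartite graph has a biconvex S-ordering: there exist linear orders <_A on A and <_B on B such that (i) for every a ∈ A the neighborhood N(a) is an interval of (B, <_B) and for every b ∈ B the neighborhood N(b) is an interval of (A, <_A), and (ii) whenever edges a_i b_s and a_j b_r are cross edges (a_i <_A a_j and b_r <_B b_s, or a_j <_A a_i and b_s <_B b_r), at least one of a_i b_r and a_j b_s is also an edge of G. -/

import Mathlib

/-- `G` is bipartite with parts `A` and `B`. -/
def IsBipartiteWith {V : Type*} (G : SimpleGraph V) (A B : Set V) : Prop :=
  A ∩ B = ∅ ∧ A ∪ B = Set.univ ∧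
    ∀ ⦃u v : V⦄, G.Adj u v → (u ∈ A ∧ v ∈ B) ∨ (u ∈ B ∧ v ∈ A)

/-- The pair of linear orders `(lA, lB)` is a biconvex ordering of `G = (A, B, E)`. -/
def BiconvexOrdering {V : Type*} (G : SimpleGraph V) (A B : Set V)
    (lA : LinearOrder ↥A) (lB : LinearOrder ↥B) : Prop :=
  (∀ (a : ↥A) (x y z : ↥B), lB.le x y → lB.le y z →
      G.Adj ↑a ↑x → G.Adj ↑a ↑z → G.Adj ↑a ↑y) ∧
  (∀ (b : ↥B) (x y z : ↥A), lA.le x y → lA.le y z →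
      G.Adj ↑x ↑b → G.Adj ↑z ↑b → G.Adj ↑y ↑b)

/-- The edges `ai-bs` and `aj-br` are cross edges with respect to `(lA, lB)`. -/
def CrossEdges {V : Type*} {A B : Set V} (lA : LinearOrder ↥A) (lB : LinearOrder ↥B)
    (ai aj : ↥A) (bs br : ↥B) : Prop :=
  (lA.lt ai aj ∧ lB.lt br bs) ∨ (lA.lt aj ai ∧ lB.lt bs br)

/-- A biconvex S-ordering: a biconvex ordering such that whenever a pair of cross
edges `ai-bs`, `aj-br` exists, at least one of `ai-br` and `aj-bs` is an edge. -/
def SOrdering {V : Type*} (G : SimpleGraph V) (A B : Set V)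
    (lA : LinearOrder ↥A) (lB : LinearOrder ↥B) : Prop :=
  BiconvexOrdering G A B lA lB ∧
  ∀ (ai aj : ↥A) (bs br : ↥B), G.Adj ↑ai ↑bs → G.Adj ↑aj ↑br →
    CrossEdges lA lB ai aj bs br → (G.Adj ↑ai ↑br ∨ G.Adj ↑aj ↑bs)

set_option linter.unusedSectionVars false
set_option linter.unusedVariables false

namespace SOrderAux

variable {α β : Type*}

section Defs
variable [LinearOrder β] (f l : α → β)

/-- interval of `x` is contained in interval of `y` -/
def Subq (x y : α) : Prop := f y ≤ f x ∧ l x ≤ l y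

/-- interval of `x` is strictly left of (dominated by) interval of `y` -/
def Dom (x y : α) : Prop := f x < f y ∧ l x < l y

/-- the interval of `x` is maximal under inclusion -/
def IsMaxI (x : α) : Prop := ∀ y, Subq f l x y → Subq f l y x

/-- `x` is right-aligned with a maximal interval `w`, and fits the gap to the next -/
def LTt (x : α) : Prop :=
  ∃ w w', IsMaxI f l w ∧ IsMaxI f l w' ∧ l x = l w ∧ f w < f x ∧ f x ≤ f w' ∧
    ∀ v, IsMaxI f l v → f v < f x → f v ≤ f w

/-- `x` is left-aligned with a maximal interval `w'`, and fits the gap to the previous -/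
def RTt (x : α) : Prop :=
  ∃ w w', IsMaxI f l w ∧ IsMaxI f l w' ∧ f x = f w' ∧ l w < l w' ∧
    ∀ v, IsMaxI f l v → l v < l w' → l v ≤ l x

def PP (x : α) : Prop := ¬ IsMaxI f l x ∧ ¬ LTt f l x ∧ ¬ RTt f l x

def PLt (x : α) : Prop := PP f l x ∧ ∃ y, PP f l y ∧ Dom f l x y

def PRt (x : α) : Prop := PP f l x ∧ ∃ y, PP f l y ∧ Dom f l y x

end Defs

section Basic
variable [LinearOrder β] {f l : α → β}

lemma subq_refl (x : α) : Subq f l x x := ⟨le_rfl, le_rfl⟩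

lemma subq_trans {x y z : α} (h1 : Subq f l x y) (h2 : Subq f l y z) : Subq f l x z :=
  ⟨h2.1.trans h1.1, h1.2.trans h2.2⟩

lemma dom_trans {x y z : α} (h1 : Dom f l x y) (h2 : Dom f l y z) : Dom f l x z :=
  ⟨h1.1.trans h2.1, h1.2.trans h2.2⟩

lemma dom_not_subq {x y : α} (h : Dom f l x y) : ¬ Subq f l x y ∧ ¬ Subq f l y x :=
  ⟨fun hs => absurd hs.1 (not_le.2 h.1), fun hs => absurd hs.2 (not_le.2 h.2)⟩

lemma incomp_dom {x y : α} (h1 : ¬ Subq f l x y) (h2 : ¬ Subq f l y x) :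
    Dom f l x y ∨ Dom f l y x := by
  rcases lt_trichotomy (f x) (f y) with hf | hf | hf
  · left
    refine ⟨hf, ?_⟩
    by_contra hl
    exact h2 ⟨hf.le, not_lt.1 hl⟩
  · exfalso
    rcases lt_trichotomy (l x) (l y) with hl | hl | hl
    · exact h1 ⟨hf.ge, hl.le⟩
    · exact h1 ⟨hf.ge, hl.le⟩
    · exact h2 ⟨hf.le, hl.le⟩
  · right
    refine ⟨hf, ?_⟩
    by_contra hl
    exact h1 ⟨hf.le, not_lt.1 hl⟩

lemma maxI_lt {u w : α} (_hu : IsMaxI f l u) (hw : IsMaxI f l w) (h : f u < f w) :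
    l u < l w := by
  by_contra hl
  have hs : Subq f l w u := ⟨h.le, not_lt.1 hl⟩
  exact absurd (hw u hs).1 (not_le.2 h)

lemma maxI_eq {u w : α} (hu : IsMaxI f l u) (hw : IsMaxI f l w) (h : f u = f w) :
    l u = l w := by
  rcases lt_trichotomy (l u) (l w) with hl | hl | hl
  · exact absurd (hu w ⟨h.ge, hl.le⟩).2 (not_le.2 hl)
  · exact hl
  · exact absurd (hw u ⟨h.le, hl.le⟩).2 (not_le.2 hl)

lemma maxI_lt' {u w : α} (hu : IsMaxI f l u) (hw : IsMaxI f l w) (h : l u < l w) :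
    f u < f w := by
  rcases lt_trichotomy (f u) (f w) with hf | hf | hf
  · exact hf
  · exact absurd (maxI_eq hu hw hf) (ne_of_lt h)
  · exact absurd h (not_lt.2 (maxI_lt hw hu hf).le)

lemma maxI_le {u w : α} (hu : IsMaxI f l u) (hw : IsMaxI f l w) (h : f u ≤ f w) :
    l u ≤ l w := by
  rcases eq_or_lt_of_le h with he | hlt
  · exact (maxI_eq hu hw he).le
  · exact (maxI_lt hu hw hlt).le

lemma maxI_le' {u w : α} (hu : IsMaxI f l u) (hw : IsMaxI f l w) (h : l u ≤ l w) :
    f u ≤ f w := by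
  by_contra hf
  exact absurd (maxI_lt hw hu (not_le.1 hf)) (not_lt.2 h)

end Basic

section Rho
variable [Fintype β] [LinearOrder β]

/-- rank of an element in a finite linear order -/
def rho (b : β) : ℕ := (Finset.univ.filter (fun b' => b' < b)).card

lemma rho_strictMono : StrictMono (rho (β := β)) := by
  intro b1 b2 h
  apply Finset.card_lt_card
  constructor
  · intro x hx
    simp only [rho, Finset.mem_filter, Finset.mem_univ, true_and] at hx ⊢
    exact hx.trans h
  · intro hsub
    have : b1 ∈ Finset.univ.filter (fun b' => b' < b2) := by
      simp [rho, h]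
    have h2 := hsub this
    simp [rho] at h2

lemma rho_le_card (b : β) : rho b ≤ Fintype.card β := by
  classical
  exact (Finset.card_filter_le _ _).trans (le_of_eq (Finset.card_univ))

lemma rho_le_iff {b b' : β} : rho b ≤ rho b' ↔ b ≤ b' := rho_strictMono.le_iff_le

lemma rho_lt_iff {b b' : β} : rho b < rho b' ↔ b < b' := rho_strictMono.lt_iff_lt

lemma rho_inj {b b' : β} (h : rho b = rho b') : b = b' := rho_strictMono.injective h

end Rho

section ExistsMax
variable [Fintype α] [Fintype β] [LinearOrder β] {f l : α → β}

/-- every interval is contained in a maximal one -/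
lemma exists_maxI (x : α) : ∃ t, IsMaxI f l t ∧ Subq f l x t := by
  classical
  set W : α → ℕ := fun t => rho (l t) + (Fintype.card β - rho (f t)) with hW
  have hWmono : ∀ {a b : α}, Subq f l a b → ¬ Subq f l b a → W a < W b := by
    intro a b hab hnba
    have h1 : rho (l a) ≤ rho (l b) := rho_le_iff.2 hab.2
    have h2 : rho (f b) ≤ rho (f a) := rho_le_iff.2 hab.1
    have h3 : rho (f a) ≤ Fintype.card β := rho_le_card _
    rcases not_and_or.1 hnba with hb | hb
    · have : f b < f a := not_le.1 hb
      have h4 : rho (f b) < rho (f a) := rho_lt_iff.2 this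
      simp only [hW]
      omega
    · have : l a < l b := not_le.1 hb
      have h4 : rho (l a) < rho (l b) := rho_lt_iff.2 this
      simp only [hW]
      omega
  have hne : (Finset.univ.filter (fun t => Subq f l x t)).Nonempty :=
    ⟨x, by simp [subq_refl]⟩
  obtain ⟨t, ht, hmax⟩ := Finset.exists_max_image _ W hne
  simp only [Finset.mem_filter, Finset.mem_univ, true_and] at ht
  refine ⟨t, ?_, ht⟩
  intro y hty
  by_contra hyt
  have hy : y ∈ Finset.univ.filter (fun t => Subq f l x t) := by
    simp only [Finset.mem_filter, Finset.mem_univ, true_and]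
    exact subq_trans ht hty
  exact absurd (hmax y hy) (not_le.2 (hWmono hty hyt))

end ExistsMax

section Gap
variable [Fintype α] [Fintype β] [LinearOrder β] {f l : α → β}

lemma maxI_congr {t x : α} (ht : IsMaxI f l t) (hf : f t = f x) (hl : l t = l x) :
    IsMaxI f l x := by
  intro y hxy
  have h1 : Subq f l t y := by rw [Subq, hf, hl]; exact hxy
  have h2 := ht y h1
  rw [Subq, ← hf, ← hl]; exact h2

lemma gapMax (hconn : ∀ u w : α, l u < f w → (∀ x, l x ≤ l u ∨ f w ≤ f x) → False)
    {p q : α} (hp : IsMaxI f l p) (_hq : IsMaxI f l q)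
    (hdisj : l p < f q) : ∃ v, IsMaxI f l v ∧ f p < f v ∧ f v < f q := by
  have h2 : ¬ ∀ x, l x ≤ l p ∨ f q ≤ f x := fun h => hconn p q hdisj h
  push_neg at h2
  obtain ⟨x, hx1, hx2⟩ := h2
  obtain ⟨t, ht, hsub⟩ := exists_maxI (f := f) (l := l) x
  refine ⟨t, ht, ?_, lt_of_le_of_lt hsub.1 hx2⟩
  exact maxI_lt' hp ht (lt_of_lt_of_le hx1 hsub.2)

lemma lemE (hfl : ∀ x, f x ≤ l x) {p q x : α}
    (hp : IsMaxI f l p) (hq : IsMaxI f l q) (hxm : ¬ IsMaxI f l x)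
    (hpq : f p < f q)
    (hcons : ∀ v, IsMaxI f l v → f p < f v → f v < f q → False)
    (hfx : f x ≤ f q) (hlx : l p ≤ l x) : LTt f l x ∨ RTt f l x := by
  obtain ⟨t, ht, hsub⟩ := exists_maxI (f := f) (l := l) x
  rcases le_or_gt (l t) (l p) with hle | hlt
  · -- l x = l t = l p, f t = f p : LTt
    have hlxp : l x = l p := le_antisymm (hsub.2.trans hle) hlx
    have hltp : l t = l p := le_antisymm hle (hlxp ▸ hsub.2)
    have hftp : f t = f p := by
      rcases lt_trichotomy (f t) (f p) with h1 | h1 | h1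
      · exact absurd (maxI_lt ht hp h1) (not_lt.2 hltp.ge)
      · exact h1
      · exact absurd (maxI_lt hp ht h1) (not_lt.2 hltp.le)
    have hfpx : f p < f x := by
      rcases lt_or_eq_of_le (hftp ▸ hsub.1) with h1 | h1
      · exact h1
      · exact absurd (maxI_congr hp h1 hlxp.symm) hxm
    left
    refine ⟨p, q, hp, hq, hlxp, hfpx, hfx, ?_⟩
    intro v hv hvx
    by_contra h3
    exact hcons v hv (not_le.1 h3) (lt_of_lt_of_le hvx hfx)
  · -- f t = f q = f x : RTt
    have hft : f p < f t := maxI_lt' hp ht hlt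
    have hftq : f t = f q := by
      rcases lt_trichotomy (f t) (f q) with h1 | h1 | h1
      · exact (hcons t ht hft h1).elim
      · exact h1
      · exact absurd (hsub.1.trans hfx) (not_le.2 h1)
    have hfxt : f x = f t := le_antisymm (hftq ▸ hfx) hsub.1
    right
    refine ⟨p, t, hp, ht, hfxt, hlt, ?_⟩
    intro v hv hvlt
    have h1 : f v < f q := hftq ▸ maxI_lt' hv ht hvlt
    have h2 : f v ≤ f p := by
      by_contra h3
      exact hcons v hv (not_le.1 h3) h1
    exact (maxI_le hv hp h2).trans hlx

end Gap

section Pi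
variable [Fintype α] [LinearOrder α] [Fintype β] [LinearOrder β] {f l : α → β}

/-- the two-sided sandwich property -/
def Sand (f l : α → β) : Prop :=
  ∀ u v w : α, u ≤ v → v ≤ w → ∀ b, f u ≤ b → b ≤ l u → f w ≤ b → b ≤ l w →
    f v ≤ b ∧ b ≤ l v

/-- the connectivity property -/
def Conn (f l : α → β) : Prop :=
  ∀ u w : α, l u < f w → (∀ x, l x ≤ l u ∨ f w ≤ f x) → False

/-- maximal intervals appear in ascending order -/
def Asc (f l : α → β) : Prop :=
  ∀ u w, IsMaxI f l u → IsMaxI f l w → f u < f w → u < w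

lemma piC (hfl : ∀ x, f x ≤ l x) (hsand : Sand f l) (hconn : Conn f l) (hasc : Asc f l)
    {x u w : α} (hxm : ¬ IsMaxI f l x) (hu : IsMaxI f l u) (hux : u < x)
    (hw : IsMaxI f l w) (hxw : x < w) : LTt f l x ∨ RTt f l x := by
  classical
  have hSbne : (Finset.univ.filter (fun t => IsMaxI f l t ∧ t < x)).Nonempty :=
    ⟨u, by simp [hu, hux]⟩
  obtain ⟨p, hpmem, hpmax⟩ := Finset.exists_max_image _ f hSbne
  simp only [Finset.mem_filter, Finset.mem_univ, true_and] at hpmem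
  obtain ⟨hp, hpx⟩ := hpmem
  have hpmax' : ∀ t, IsMaxI f l t → t < x → f t ≤ f p := by
    intro t ht htx
    exact hpmax t (by simp [ht, htx])
  have hpw : f p < f w := by
    rcases lt_trichotomy (f p) (f w) with h1 | h1 | h1
    · exact h1
    · exfalso
      have hlw : l w = l p := maxI_eq hw hp h1.symm
      have h2 := hsand p x w hpx.le hxw.le
      have h3 := h2 (f p) le_rfl (hfl p) h1.ge ((hfl p).trans hlw.ge)
      have h4 := h2 (l p) (hfl p) le_rfl (h1.ge.trans (hfl p)) hlw.ge
      have hspx : Subq f l p x := ⟨h3.1, h4.2⟩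
      have hsxp := hp x hspx
      exact hxm (maxI_congr hp (le_antisymm hsxp.1 hspx.1)
        (le_antisymm hspx.2 hsxp.2))
    · exact absurd ((hasc w p hw hp h1).trans hpx) (not_lt.2 hxw.le)
  have hSane : (Finset.univ.filter (fun t => IsMaxI f l t ∧ f p < f t)).Nonempty :=
    ⟨w, by simp [hw, hpw]⟩
  obtain ⟨q, hqmem, hqmin⟩ := Finset.exists_min_image _ f hSane
  simp only [Finset.mem_filter, Finset.mem_univ, true_and] at hqmem
  obtain ⟨hq, hpq⟩ := hqmem
  have hqmin' : ∀ t, IsMaxI f l t → f p < f t → f q ≤ f t := by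
    intro t ht htf
    exact hqmin t (by simp [ht, htf])
  have hxq : x < q := by
    rcases lt_trichotomy x q with h1 | h1 | h1
    · exact h1
    · exact absurd (h1 ▸ hq) hxm
    · exact absurd hpq (not_lt.2 (hpmax' q hq h1))
  have hcons : ∀ v, IsMaxI f l v → f p < f v → f v < f q → False := by
    intro v hv h1 h2
    exact absurd (hqmin' v hv h1) (not_le.2 h2)
  have hover : f q ≤ l p := by
    by_contra h1
    obtain ⟨v, hv, hv1, hv2⟩ := gapMax hconn hp hq (not_le.1 h1)
    exact hcons v hv hv1 hv2
  have hlpq : l p ≤ l q := (maxI_lt hp hq hpq).le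
  have h2 := hsand p x q hpx.le hxq.le
  have h3 := h2 (l p) (hfl p) le_rfl hover hlpq
  have h4 := h2 (f q) hpq.le hover le_rfl (hfl q)
  exact lemE hfl hp hq hxm hpq hcons h4.1 h3.2

lemma piD (hfl : ∀ x, f x ≤ l x) (hsand : Sand f l) (hasc : Asc f l)
    {x wmin : α} (hxm : ¬ IsMaxI f l x) (hwmin : IsMaxI f l wmin)
    (hwminle : ∀ t, IsMaxI f l t → f wmin ≤ f t)
    (houter : ∀ t, IsMaxI f l t → x < t) : Subq f l x wmin := by
  obtain ⟨t, ht, hsub⟩ := exists_maxI (f := f) (l := l) x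
  rcases eq_or_lt_of_le (hwminle t ht) with h1 | h1
  · exact ⟨h1.le.trans hsub.1, hsub.2.trans (maxI_eq hwmin ht h1).ge⟩
  · have h2 := hasc wmin t hwmin ht h1
    have h3 := hsand x wmin t (houter wmin hwmin).le h2.le
    have h4 := h3 (f x) le_rfl (hfl x) hsub.1 ((hfl x).trans hsub.2)
    have h5 := h3 (l x) (hfl x) le_rfl (hsub.1.trans (hfl x)) hsub.2
    exact ⟨h4.1, h5.2⟩

lemma piD' (hfl : ∀ x, f x ≤ l x) (hsand : Sand f l) (hasc : Asc f l)
    {x wmax : α} (hxm : ¬ IsMaxI f l x) (hwmax : IsMaxI f l wmax)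
    (hwmaxle : ∀ t, IsMaxI f l t → f t ≤ f wmax)
    (houter : ∀ t, IsMaxI f l t → t < x) : Subq f l x wmax := by
  obtain ⟨t, ht, hsub⟩ := exists_maxI (f := f) (l := l) x
  rcases eq_or_lt_of_le (hwmaxle t ht) with h1 | h1
  · exact ⟨h1.ge.trans hsub.1, hsub.2.trans (maxI_eq ht hwmax h1).le⟩
  · have h2 := hasc t wmax ht hwmax h1
    have h3 := hsand t wmax x h2.le (houter wmax hwmax).le
    have h4 := h3 (f x) hsub.1 ((hfl x).trans hsub.2) le_rfl (hfl x)
    have h5 := h3 (l x) (hsub.1.trans (hfl x)) hsub.2 (hfl x) le_rfl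
    exact ⟨h4.1, h5.2⟩

lemma piA (hfl : ∀ x, f x ≤ l x) (hsand : Sand f l) (hasc : Asc f l)
    {x y wmin : α} (hxm : ¬ IsMaxI f l x) (hym : ¬ IsMaxI f l y)
    (hwmin : IsMaxI f l wmin) (hwminle : ∀ t, IsMaxI f l t → f wmin ≤ f t)
    (hox : ∀ t, IsMaxI f l t → x < t) (hoy : ∀ t, IsMaxI f l t → y < t) :
    Subq f l x y ∨ Subq f l y x := by
  have hxs := piD hfl hsand hasc hxm hwmin hwminle hox
  have hys := piD hfl hsand hasc hym hwmin hwminle hoy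
  rcases lt_trichotomy x y with h1 | h1 | h1
  · left
    have h3 := hsand x y wmin h1.le (hoy wmin hwmin).le
    have h4 := h3 (f x) le_rfl (hfl x) hxs.1 ((hfl x).trans hxs.2)
    have h5 := h3 (l x) (hfl x) le_rfl (hxs.1.trans (hfl x)) hxs.2
    exact ⟨h4.1, h5.2⟩
  · left; exact h1 ▸ subq_refl x
  · right
    have h3 := hsand y x wmin h1.le (hox wmin hwmin).le
    have h4 := h3 (f y) le_rfl (hfl y) hys.1 ((hfl y).trans hys.2)
    have h5 := h3 (l y) (hfl y) le_rfl (hys.1.trans (hfl y)) hys.2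
    exact ⟨h4.1, h5.2⟩

lemma piA' (hfl : ∀ x, f x ≤ l x) (hsand : Sand f l) (hasc : Asc f l)
    {x y wmax : α} (hxm : ¬ IsMaxI f l x) (hym : ¬ IsMaxI f l y)
    (hwmax : IsMaxI f l wmax) (hwmaxle : ∀ t, IsMaxI f l t → f t ≤ f wmax)
    (hox : ∀ t, IsMaxI f l t → t < x) (hoy : ∀ t, IsMaxI f l t → t < y) :
    Subq f l x y ∨ Subq f l y x := by
  have hxs := piD' hfl hsand hasc hxm hwmax hwmaxle hox
  have hys := piD' hfl hsand hasc hym hwmax hwmaxle hoy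
  rcases lt_trichotomy x y with h1 | h1 | h1
  · right
    have h3 := hsand wmax x y (hox wmax hwmax).le h1.le
    have h4 := h3 (f y) hys.1 ((hfl y).trans hys.2) le_rfl (hfl y)
    have h5 := h3 (l y) (hys.1.trans (hfl y)) hys.2 (hfl y) le_rfl
    exact ⟨h4.1, h5.2⟩
  · left; exact h1 ▸ subq_refl x
  · left
    have h3 := hsand wmax y x (hoy wmax hwmax).le h1.le
    have h4 := h3 (f x) hxs.1 ((hfl x).trans hxs.2) le_rfl (hfl x)
    have h5 := h3 (l x) (hxs.1.trans (hfl x)) hxs.2 (hfl x) le_rfl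
    exact ⟨h4.1, h5.2⟩

lemma piOuter (hfl : ∀ x, f x ≤ l x) (hsand : Sand f l) (hconn : Conn f l) (hasc : Asc f l)
    {x : α} (hx : PP f l x) :
    (∀ t, IsMaxI f l t → x < t) ∨ (∀ t, IsMaxI f l t → t < x) := by
  by_contra h
  push_neg at h
  obtain ⟨⟨t, ht, htx⟩, ⟨s, hs, hsx⟩⟩ := h
  have h1 : t < x := lt_of_le_of_ne htx (fun h => hx.1 (h ▸ ht))
  have h2 : x < s := lt_of_le_of_ne hsx (fun h => hx.1 (h.symm ▸ hs))
  rcases piC hfl hsand hconn hasc hx.1 ht h1 hs h2 with h3 | h3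
  · exact hx.2.1 h3
  · exact hx.2.2 h3

lemma fwmin_le_all {wmin : α} (hwminle : ∀ t, IsMaxI f l t → f wmin ≤ f t) (z : α) :
    f wmin ≤ f z := by
  obtain ⟨t, ht, hsub⟩ := exists_maxI (f := f) (l := l) z
  exact (hwminle t ht).trans hsub.1

lemma lwmax_ge_all {wmax : α} (hwmax : IsMaxI f l wmax)
    (hwmaxle : ∀ t, IsMaxI f l t → f t ≤ f wmax) (z : α) : l z ≤ l wmax := by
  obtain ⟨t, ht, hsub⟩ := exists_maxI (f := f) (l := l) z
  exact hsub.2.trans (maxI_le ht hwmax (hwmaxle t ht))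

lemma claimPL (hfl : ∀ x, f x ≤ l x) (hsand : Sand f l) (hconn : Conn f l) (hasc : Asc f l)
    {wmin wmax : α} (hwmin : IsMaxI f l wmin) (hwminle : ∀ t, IsMaxI f l t → f wmin ≤ f t)
    (hwmax : IsMaxI f l wmax) (hwmaxle : ∀ t, IsMaxI f l t → f t ≤ f wmax)
    {x : α} (hx : PLt f l x) : Subq f l x wmin := by
  obtain ⟨hPx, y, hPy, hDom⟩ := hx
  by_contra hns
  have hlx : l wmin < l x := by
    rcases not_and_or.1 hns with h | h
    · exact absurd (fwmin_le_all hwminle x) h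
    · exact not_le.1 h
  have hxo : ∀ t, IsMaxI f l t → t < x := by
    rcases piOuter hfl hsand hconn hasc hPx with h | h
    · exact absurd (piD hfl hsand hasc hPx.1 hwmin hwminle h).2 (not_le.2 hlx)
    · exact h
  have hyo : ∀ t, IsMaxI f l t → t < y := by
    rcases piOuter hfl hsand hconn hasc hPy with h | h
    · exact absurd (piD hfl hsand hasc hPy.1 hwmin hwminle h).2
        (not_le.2 (hlx.trans hDom.2))
    · exact h
  rcases piA' hfl hsand hasc hPx.1 hPy.1 hwmax hwmaxle hxo hyo with h | h
  · exact (dom_not_subq hDom).1 h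
  · exact (dom_not_subq hDom).2 h

lemma claimPR (hfl : ∀ x, f x ≤ l x) (hsand : Sand f l) (hconn : Conn f l) (hasc : Asc f l)
    {wmin wmax : α} (hwmin : IsMaxI f l wmin) (hwminle : ∀ t, IsMaxI f l t → f wmin ≤ f t)
    (hwmax : IsMaxI f l wmax) (hwmaxle : ∀ t, IsMaxI f l t → f t ≤ f wmax)
    {x : α} (hx : PRt f l x) : Subq f l x wmax := by
  obtain ⟨hPx, y, hPy, hDom⟩ := hx
  by_contra hns
  have hfx : f x < f wmax := by
    rcases not_and_or.1 hns with h | h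
    · exact not_le.1 h
    · exact absurd (lwmax_ge_all hwmax hwmaxle x) h
  have hxo : ∀ t, IsMaxI f l t → x < t := by
    rcases piOuter hfl hsand hconn hasc hPx with h | h
    · exact h
    · exact absurd (piD' hfl hsand hasc hPx.1 hwmax hwmaxle h).1 (not_le.2 hfx)
  have hyo : ∀ t, IsMaxI f l t → y < t := by
    rcases piOuter hfl hsand hconn hasc hPy with h | h
    · exact h
    · exact absurd (piD' hfl hsand hasc hPy.1 hwmax hwmaxle h).1
        (not_le.2 (hDom.1.trans hfx))
  rcases piA hfl hsand hasc hPx.1 hPy.1 hwmin hwminle hxo hyo with h | h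
  · exact (dom_not_subq hDom).2 h
  · exact (dom_not_subq hDom).1 h

lemma claimNoBoth (hfl : ∀ x, f x ≤ l x) (hsand : Sand f l) (hconn : Conn f l)
    (hasc : Asc f l)
    {wmin wmax : α} (hwmin : IsMaxI f l wmin) (hwminle : ∀ t, IsMaxI f l t → f wmin ≤ f t)
    (hwmax : IsMaxI f l wmax) (hwmaxle : ∀ t, IsMaxI f l t → f t ≤ f wmax)
    {x : α} (h1 : PLt f l x) (h2 : PRt f l x) : False := by
  obtain ⟨hPx, y, hPy, hDxy⟩ := h1
  obtain ⟨_, z, hPz, hDzx⟩ := h2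
  have hDzy : Dom f l z y := dom_trans hDzx hDxy
  have key : ∀ a b : α, PP f l a → PP f l b → Dom f l a b →
      ((∀ t, IsMaxI f l t → a < t) ∨ (∀ t, IsMaxI f l t → t < a)) →
      ((∀ t, IsMaxI f l t → b < t) ∨ (∀ t, IsMaxI f l t → t < b)) →
      ((∀ t, IsMaxI f l t → a < t) ∧ (∀ t, IsMaxI f l t → b < t)) ∨
      ((∀ t, IsMaxI f l t → t < a) ∧ (∀ t, IsMaxI f l t → t < b)) → False := by
    intro a b hPa hPb hD _ _ hsame
    rcases hsame with ⟨ha, hb⟩ | ⟨ha, hb⟩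
    · rcases piA hfl hsand hasc hPa.1 hPb.1 hwmin hwminle ha hb with h | h
      · exact (dom_not_subq hD).1 h
      · exact (dom_not_subq hD).2 h
    · rcases piA' hfl hsand hasc hPa.1 hPb.1 hwmax hwmaxle ha hb with h | h
      · exact (dom_not_subq hD).1 h
      · exact (dom_not_subq hD).2 h
  rcases piOuter hfl hsand hconn hasc hPx with hox | hox <;>
  rcases piOuter hfl hsand hconn hasc hPy with hoy | hoy <;>
  rcases piOuter hfl hsand hconn hasc hPz with hoz | hoz
  · exact key x y hPx hPy hDxy (Or.inl hox) (Or.inl hoy) (Or.inl ⟨hox, hoy⟩)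
  · exact key x y hPx hPy hDxy (Or.inl hox) (Or.inl hoy) (Or.inl ⟨hox, hoy⟩)
  · exact key z x hPz hPx hDzx (Or.inl hoz) (Or.inl hox) (Or.inl ⟨hoz, hox⟩)
  · exact key z y hPz hPy hDzy (Or.inr hoz) (Or.inr hoy) (Or.inr ⟨hoz, hoy⟩)
  · exact key z y hPz hPy hDzy (Or.inl hoz) (Or.inl hoy) (Or.inl ⟨hoz, hoy⟩)
  · exact key z x hPz hPx hDzx (Or.inr hoz) (Or.inr hox) (Or.inr ⟨hoz, hox⟩)
  · exact key x y hPx hPy hDxy (Or.inr hox) (Or.inr hoy) (Or.inr ⟨hox, hoy⟩)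
  · exact key x y hPx hPy hDxy (Or.inr hox) (Or.inr hoy) (Or.inr ⟨hox, hoy⟩)

end Pi

section Core
variable [Fintype α] [LinearOrder α] [Fintype β] [LinearOrder β]

open Classical in
/-- region: 0 = left end chain, 1 = middle, 2 = right end chain -/
noncomputable def regF (f l : α → β) (wmin : α) (x : α) : ℕ :=
  if PLt f l x ∨ (PP f l x ∧ ¬ PRt f l x ∧ Subq f l x wmin) then 0
  else if PP f l x then 2 else 1

open Classical in
noncomputable def k1F (f l : α → β) (wmin : α) (x : α) : ℕ :=
  if regF f l wmin x = 2 then Fintype.card β - rho (l x) else rho (l x)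

open Classical in
noncomputable def k2F (f l : α → β) (wmin : α) (x : α) : ℕ :=
  if regF f l wmin x = 0 then Fintype.card β - rho (f x) else rho (f x)

noncomputable def kappaF (f l : α → β) (wmin : α) (x : α) : ℕ ×ₗ (ℕ ×ₗ ℕ) :=
  toLex (regF f l wmin x, toLex (k1F f l wmin x, k2F f l wmin x))

variable {f l : α → β} {wmin : α}

lemma regF_cases (x : α) : regF f l wmin x = 0 ∨ regF f l wmin x = 1 ∨ regF f l wmin x = 2 := by
  unfold regF
  split
  · exact Or.inl rfl
  · split
    · exact Or.inr (Or.inr rfl)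
    · exact Or.inr (Or.inl rfl)

lemma regF_eq_zero_iff {x : α} :
    regF f l wmin x = 0 ↔ (PLt f l x ∨ (PP f l x ∧ ¬ PRt f l x ∧ Subq f l x wmin)) := by
  unfold regF
  split
  · rename_i h
    exact iff_of_true rfl h
  · rename_i h
    split <;> exact iff_of_false (by norm_num) h

lemma regF_eq_one_iff {x : α} : regF f l wmin x = 1 ↔ ¬ PP f l x := by
  unfold regF
  split
  · rename_i h
    refine iff_of_false (by norm_num) ?_
    rcases h with h | h
    · exact not_not_intro h.1
    · exact not_not_intro h.1
  · split
    · rename_i h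
      exact iff_of_false (by norm_num) (not_not_intro h)
    · rename_i h
      exact iff_of_true rfl h

lemma regF_eq_two_iff {x : α} :
    regF f l wmin x = 2 ↔
      (PP f l x ∧ ¬(PLt f l x ∨ (PP f l x ∧ ¬ PRt f l x ∧ Subq f l x wmin))) := by
  unfold regF
  split
  · rename_i h
    exact iff_of_false (by norm_num) (fun hc => hc.2 h)
  · rename_i h
    split
    · rename_i h2
      exact iff_of_true rfl ⟨h2, h⟩
    · rename_i h2
      exact iff_of_false (by norm_num) (fun hc => h2 hc.1)

lemma regF_zero_PP {x : α} (h : regF f l wmin x = 0) : PP f l x := by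
  rcases regF_eq_zero_iff.1 h with h1 | h1
  · exact h1.1
  · exact h1.1

lemma k1F_of_ne_two {x : α} (h : regF f l wmin x ≠ 2) : k1F f l wmin x = rho (l x) := by
  unfold k1F
  simp [h]

lemma k1F_of_two {x : α} (h : regF f l wmin x = 2) :
    k1F f l wmin x = Fintype.card β - rho (l x) := by
  unfold k1F
  simp [h]

lemma k2F_of_ne_zero {x : α} (h : regF f l wmin x ≠ 0) : k2F f l wmin x = rho (f x) := by
  unfold k2F
  simp [h]

lemma k2F_of_zero {x : α} (h : regF f l wmin x = 0) :
    k2F f l wmin x = Fintype.card β - rho (f x) := by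
  unfold k2F
  simp [h]

lemma kappaF_le_unpack {x y : α} (h : kappaF f l wmin x ≤ kappaF f l wmin y) :
    regF f l wmin x < regF f l wmin y ∨
      (regF f l wmin x = regF f l wmin y ∧
        (k1F f l wmin x < k1F f l wmin y ∨
          (k1F f l wmin x = k1F f l wmin y ∧ k2F f l wmin x ≤ k2F f l wmin y))) := by
  have h1 := (Prod.Lex.le_iff).1 h
  rcases h1 with h1 | ⟨h1, h2⟩
  · exact Or.inl h1
  · exact Or.inr ⟨h1, (Prod.Lex.le_iff).1 h2⟩

/-- within region 1: the (l, f) lex key facts -/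
lemma kappaF_reg1_le {x y : α} (hx : regF f l wmin x = 1) (hy : regF f l wmin y = 1)
    (h : kappaF f l wmin x ≤ kappaF f l wmin y) :
    l x < l y ∨ (l x = l y ∧ f x ≤ f y) := by
  rcases kappaF_le_unpack h with h1 | ⟨_, h2⟩
  · omega
  · rw [k1F_of_ne_two (by omega), k1F_of_ne_two (by omega),
      k2F_of_ne_zero (by omega), k2F_of_ne_zero (by omega)] at h2
    rcases h2 with h2 | ⟨h2, h3⟩
    · exact Or.inl (rho_lt_iff.1 h2)
    · exact Or.inr ⟨rho_inj h2, rho_le_iff.1 h3⟩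

/-- `x` is in the middle region structurally -/
def R1 (f l : α → β) (x : α) : Prop := IsMaxI f l x ∨ LTt f l x ∨ RTt f l x

lemma not_PP_iff_R1 {x : α} : ¬ PP f l x ↔ R1 f l x := by
  unfold PP R1
  tauto

lemma rtt_lt {x w' : α} (hw' : IsMaxI f l w') (hfx : f x = f w') (hxm : ¬ IsMaxI f l x) :
    l x < l w' := by
  rcases lt_trichotomy (l x) (l w') with h | h | h
  · exact h
  · exact absurd (maxI_congr hw' hfx.symm h.symm) hxm
  · have hs : Subq f l w' x := ⟨hfx.le, h.le⟩
    have hs2 := hw' x hs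
    exact absurd (maxI_congr hw' hfx.symm (le_antisymm hs2.2 h.le).symm) hxm

lemma lwmin_le_R1 (hwmin : IsMaxI f l wmin) (hwminle : ∀ t, IsMaxI f l t → f wmin ≤ f t)
    {v : α} (hv : R1 f l v) : l wmin ≤ l v := by
  rcases hv with hM | hL | hR
  · exact maxI_le hwmin hM (hwminle v hM)
  · obtain ⟨w, w', hw, hw', hlv, _, _, _⟩ := hL
    exact hlv ▸ maxI_le hwmin hw (hwminle w hw)
  · obtain ⟨w, w', hw, hw', hfv, hlww', hcond⟩ := hR
    have h1 : l wmin ≤ l w := maxI_le hwmin hw (hwminle w hw)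
    exact hcond wmin hwmin (lt_of_le_of_lt h1 hlww')

lemma f_le_fwmax_R1 {wmax : α} (hwmax : IsMaxI f l wmax)
    (hwmaxle : ∀ t, IsMaxI f l t → f t ≤ f wmax)
    {u : α} (hu : R1 f l u) : f u ≤ f wmax := by
  rcases hu with hM | hL | hR
  · exact hwmaxle u hM
  · obtain ⟨w, w', hw, hw', _, _, hfw', _⟩ := hL
    exact hfw'.trans (hwmaxle w' hw')
  · obtain ⟨w, w', hw, hw', hfv, _, _⟩ := hR
    exact hfv.le.trans (hwmaxle w' hw')

/-- the key middle-region monotonicity: `l v < l w → f v ≤ f w` -/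
lemma step1 {v w : α} (hv : R1 f l v) (hw : R1 f l w) (hlt : l v < l w) : f v ≤ f w := by
  by_cases hMw : IsMaxI f l w
  · by_cases hMv : IsMaxI f l v
    · exact (maxI_lt' hMv hMw hlt).le
    · have hv' : LTt f l v ∨ RTt f l v := by
        rcases hv with hM | hL | hR
        · exact absurd hM hMv
        · exact Or.inl hL
        · exact Or.inr hR
      rcases hv' with ⟨w0, w0', hw0, hw0', hlv, hfw0v, hfvw0', hcondv⟩ |
          ⟨w0, w0', hw0, hw0', hfv, hlw0w0', hcondv⟩
      · have h1 : f w0 < f w := maxI_lt' hw0 hMw (hlv ▸ hlt)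
        by_contra h2
        exact absurd (hcondv w hMw (not_le.1 h2)) (not_le.2 h1)
      · rcases le_or_gt (l w0') (l w) with h1 | h1
        · exact hfv.le.trans (maxI_le' hw0' hMw h1)
        · exact absurd (hcondv w hMw h1) (not_le.2 hlt)
  · have hw' : LTt f l w ∨ RTt f l w := by
      rcases hw with hM | hL | hR
      · exact absurd hM hMw
      · exact Or.inl hL
      · exact Or.inr hR
    rcases hw' with ⟨t0, t0', ht0, ht0', hlw, hft0w, _, _⟩ |
        ⟨t0, t0', ht0, ht0', hfw, hlt0t0', hcondw⟩
    · -- w is LT-type : l w = l t0, f t0 < f w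
      by_cases hMv : IsMaxI f l v
      · exact ((maxI_lt' hMv ht0 (hlw ▸ hlt)).trans hft0w).le
      · have hv' : LTt f l v ∨ RTt f l v := by
          rcases hv with hM | hL | hR
          · exact absurd hM hMv
          · exact Or.inl hL
          · exact Or.inr hR
        rcases hv' with ⟨w0, w0', hw0, hw0', hlv, hfw0v, hfvw0', hcondv⟩ |
            ⟨w0, w0', hw0, hw0', hfv, hlw0w0', hcondv⟩
        · have h1 : f w0 < f t0 := maxI_lt' hw0 ht0 (by rw [← hlv, ← hlw]; exact hlt)
          have h2 : f v ≤ f t0 := by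
            by_contra h2
            exact absurd (hcondv t0 ht0 (not_le.1 h2)) (not_le.2 h1)
          exact h2.trans hft0w.le
        · rcases le_or_gt (l w0') (l t0) with h1 | h1
          · exact (hfv.le.trans (maxI_le' hw0' ht0 h1)).trans hft0w.le
          · exact absurd (hcondv t0 ht0 h1) (not_le.2 (hlw ▸ hlt))
    · -- w is RT-type : f w = f t0'
      have hwlt : l w < l t0' := rtt_lt ht0' hfw hMw
      by_cases hMv : IsMaxI f l v
      · exact hfw ▸ (maxI_lt' hMv ht0' (hlt.trans hwlt)).le
      · have hv' : LTt f l v ∨ RTt f l v := by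
          rcases hv with hM | hL | hR
          · exact absurd hM hMv
          · exact Or.inl hL
          · exact Or.inr hR
        rcases hv' with ⟨w0, w0', hw0, hw0', hlv, hfw0v, hfvw0', hcondv⟩ |
            ⟨w0, w0', hw0, hw0', hfv, hlw0w0', hcondv⟩
        · have h1 : f w0 < f t0' := maxI_lt' hw0 ht0' (by rw [← hlv]; exact hlt.trans hwlt)
          have h2 : f v ≤ f t0' := by
            by_contra h2
            exact absurd (hcondv t0' ht0' (not_le.1 h2)) (not_le.2 h1)
          exact hfw ▸ h2
        · rcases le_or_gt (l w0') (l t0') with h1 | h1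
          · exact hfw ▸ (hfv.le.trans (maxI_le' hw0' ht0' h1))
          · exact absurd (hcondv t0' ht0' h1) (not_le.2 (hlt.trans hwlt))

lemma kappaF_le_reg {x y : α} (h : kappaF f l wmin x ≤ kappaF f l wmin y) :
    regF f l wmin x ≤ regF f l wmin y := by
  rcases kappaF_le_unpack h with h1 | ⟨h1, _⟩
  · exact h1.le
  · exact h1.le

section Claims
variable (hfl : ∀ x : α, f x ≤ l x) (hsand : Sand f l) (hconn : Conn f l) (hasc : Asc f l)
variable {wmax : α}
variable (hwmin : IsMaxI f l wmin) (hwminle : ∀ t, IsMaxI f l t → f wmin ≤ f t)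
variable (hwmax : IsMaxI f l wmax) (hwmaxle : ∀ t, IsMaxI f l t → f t ≤ f wmax)

include hfl hsand hconn hasc hwmin hwminle hwmax hwmaxle

lemma reg0_subq {x : α} (h : regF f l wmin x = 0) : Subq f l x wmin := by
  rcases regF_eq_zero_iff.1 h with h1 | h1
  · exact claimPL hfl hsand hconn hasc hwmin hwminle hwmax hwmaxle h1
  · exact h1.2.2

lemma reg2_subq {x : α} (h : regF f l wmin x = 2) : Subq f l x wmax := by
  obtain ⟨hPP, hnc⟩ := regF_eq_two_iff.1 h
  by_cases hPR : PRt f l x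
  · exact claimPR hfl hsand hconn hasc hwmin hwminle hwmax hwmaxle hPR
  · have hnsub : ¬ Subq f l x wmin := fun hs => hnc (Or.inr ⟨hPP, hPR, hs⟩)
    rcases piOuter hfl hsand hconn hasc hPP with ho | ho
    · exact absurd (piD hfl hsand hasc hPP.1 hwmin hwminle ho) hnsub
    · exact piD' hfl hsand hasc hPP.1 hwmax hwmaxle ho

lemma chain0 {x y : α} (hx : regF f l wmin x = 0) (hy : regF f l wmin y = 0)
    (hκ : kappaF f l wmin x ≤ kappaF f l wmin y) : Subq f l x y := by
  have hPx : PP f l x := regF_zero_PP hx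
  have hPy : PP f l y := regF_zero_PP hy
  have hcomp : Subq f l x y ∨ Subq f l y x := by
    by_contra hc
    push_neg at hc
    rcases incomp_dom hc.1 hc.2 with hD | hD
    · have hPRy : PRt f l y := ⟨hPy, x, hPx, hD⟩
      rcases regF_eq_zero_iff.1 hy with h1 | h1
      · exact claimNoBoth hfl hsand hconn hasc hwmin hwminle hwmax hwmaxle h1 hPRy
      · exact h1.2.1 hPRy
    · have hPRx : PRt f l x := ⟨hPx, y, hPy, hD⟩
      rcases regF_eq_zero_iff.1 hx with h1 | h1
      · exact claimNoBoth hfl hsand hconn hasc hwmin hwminle hwmax hwmaxle h1 hPRx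
      · exact h1.2.1 hPRx
  rcases hcomp with hxy | hyx
  · exact hxy
  · rcases kappaF_le_unpack hκ with h1 | ⟨_, h2⟩
    · omega
    · rw [k1F_of_ne_two (by omega), k1F_of_ne_two (by omega),
        k2F_of_zero hx, k2F_of_zero hy] at h2
      have hr1 : rho (f x) ≤ Fintype.card β := rho_le_card _
      have hr2 : rho (f y) ≤ Fintype.card β := rho_le_card _
      rcases h2 with h2 | ⟨h2, h3⟩
      · exact absurd (rho_lt_iff.1 h2) (not_lt.2 hyx.2)
      · have hfyx : f y ≤ f x := rho_le_iff.1 (by omega)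
        exact ⟨hfyx, (rho_inj h2).le⟩

lemma chain2 {x y : α} (hx : regF f l wmin x = 2) (hy : regF f l wmin y = 2)
    (hκ : kappaF f l wmin x ≤ kappaF f l wmin y) : Subq f l y x := by
  have hPx : PP f l x := (regF_eq_two_iff.1 hx).1
  have hPy : PP f l y := (regF_eq_two_iff.1 hy).1
  have hcomp : Subq f l x y ∨ Subq f l y x := by
    by_contra hc
    push_neg at hc
    rcases incomp_dom hc.1 hc.2 with hD | hD
    · exact (regF_eq_two_iff.1 hx).2 (Or.inl ⟨hPx, y, hPy, hD⟩)
    · exact (regF_eq_two_iff.1 hy).2 (Or.inl ⟨hPy, x, hPx, hD⟩)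
  rcases hcomp with hxy | hyx
  · rcases kappaF_le_unpack hκ with h1 | ⟨_, h2⟩
    · omega
    · rw [k1F_of_two hx, k1F_of_two hy, k2F_of_ne_zero (by omega),
        k2F_of_ne_zero (by omega)] at h2
      have hr1 : rho (l x) ≤ Fintype.card β := rho_le_card _
      have hr2 : rho (l y) ≤ Fintype.card β := rho_le_card _
      rcases h2 with h2 | ⟨h2, h3⟩
      · have : l y < l x := rho_lt_iff.1 (by omega)
        exact absurd this (not_lt.2 hxy.2)
      · have hlyx : l x = l y := rho_inj (by omega)
        exact ⟨rho_le_iff.1 h3, hlyx.ge⟩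
  · exact hyx

lemma coreC1 : ∀ u v w b, kappaF f l wmin u ≤ kappaF f l wmin v →
    kappaF f l wmin v ≤ kappaF f l wmin w →
    f u ≤ b → b ≤ l u → f w ≤ b → b ≤ l w → f v ≤ b ∧ b ≤ l v := by
  intro u v w b huv hvw hfu hlu hfw hlw
  rcases regF_cases (f := f) (l := l) (wmin := wmin) v with h1 | h1 | h1
  · have hu0 : regF f l wmin u = 0 := by
      have := kappaF_le_reg huv
      omega
    have hs := chain0 hfl hsand hconn hasc hwmin hwminle hwmax hwmaxle hu0 h1 huv
    exact ⟨hs.1.trans hfu, hlu.trans hs.2⟩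
  · have hR1v : R1 f l v := not_PP_iff_R1.1 (regF_eq_one_iff.1 h1)
    constructor
    · -- lower bound from w
      rcases regF_cases (f := f) (l := l) (wmin := wmin) w with g1 | g1 | g1
      · have := kappaF_le_reg hvw
        omega
      · have hR1w : R1 f l w := not_PP_iff_R1.1 (regF_eq_one_iff.1 g1)
        rcases kappaF_reg1_le h1 g1 hvw with h2 | ⟨h2, h3⟩
        · exact (step1 hR1v hR1w h2).trans hfw
        · exact h3.trans hfw
      · have hsw := reg2_subq hfl hsand hconn hasc hwmin hwminle hwmax hwmaxle g1
        exact ((f_le_fwmax_R1 hwmax hwmaxle hR1v).trans hsw.1).trans hfw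
    · -- upper bound from u
      rcases regF_cases (f := f) (l := l) (wmin := wmin) u with g1 | g1 | g1
      · have hsu := reg0_subq hfl hsand hconn hasc hwmin hwminle hwmax hwmaxle g1
        exact hlu.trans (hsu.2.trans (lwmin_le_R1 hwmin hwminle hR1v))
      · rcases kappaF_reg1_le g1 h1 huv with h2 | ⟨h2, h3⟩
        · exact hlu.trans h2.le
        · exact hlu.trans h2.le
      · have := kappaF_le_reg huv
        omega
  · have hw2 : regF f l wmin w = 2 := by
      have h2 := kappaF_le_reg hvw
      rcases regF_cases (f := f) (l := l) (wmin := wmin) w with g1 | g1 | g1 <;> omega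
    have hs := chain2 hfl hsand hconn hasc hwmin hwminle hwmax hwmaxle h1 hw2 hvw
    exact ⟨hs.1.trans hfw, hlw.trans hs.2⟩

lemma coreC2 : ∀ u w, kappaF f l wmin u ≤ kappaF f l wmin w → ¬ Dom f l w u := by
  intro u w hκ hD
  rcases regF_cases (f := f) (l := l) (wmin := wmin) u with h1 | h1 | h1 <;>
    rcases regF_cases (f := f) (l := l) (wmin := wmin) w with g1 | g1 | g1
  · exact (dom_not_subq hD).2
      (chain0 hfl hsand hconn hasc hwmin hwminle hwmax hwmaxle h1 g1 hκ)
  · have hR1w : R1 f l w := not_PP_iff_R1.1 (regF_eq_one_iff.1 g1)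
    have hsu := reg0_subq hfl hsand hconn hasc hwmin hwminle hwmax hwmaxle h1
    exact absurd hD.2 (not_lt.2 (hsu.2.trans (lwmin_le_R1 hwmin hwminle hR1w)))
  · have hPLw : PLt f l w := ⟨(regF_eq_two_iff.1 g1).1, u, regF_zero_PP h1, hD⟩
    exact (regF_eq_two_iff.1 g1).2 (Or.inl hPLw)
  · have := kappaF_le_reg hκ
    omega
  · have hR1u : R1 f l u := not_PP_iff_R1.1 (regF_eq_one_iff.1 h1)
    have hR1w : R1 f l w := not_PP_iff_R1.1 (regF_eq_one_iff.1 g1)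
    rcases kappaF_reg1_le h1 g1 hκ with h2 | ⟨h2, _⟩
    · exact absurd hD.2 (not_lt.2 h2.le)
    · exact absurd hD.2 (not_lt.2 h2.le)
  · have hR1u : R1 f l u := not_PP_iff_R1.1 (regF_eq_one_iff.1 h1)
    have hsw := reg2_subq hfl hsand hconn hasc hwmin hwminle hwmax hwmaxle g1
    exact absurd hD.1 (not_lt.2 ((f_le_fwmax_R1 hwmax hwmaxle hR1u).trans hsw.1))
  · have := kappaF_le_reg hκ
    omega
  · have := kappaF_le_reg hκ
    omega
  · exact (dom_not_subq hD).1
      (chain2 hfl hsand hconn hasc hwmin hwminle hwmax hwmaxle h1 g1 hκ)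

end Claims

end Core

section Orient
variable [Fintype α] [LinearOrder α] [Fintype β] [LinearOrder β] {f l : α → β}

open Classical in
/-- number of maximal keys strictly between -/
noncomputable def mcard (f l : α → β) (p r : α) : ℕ :=
  (Finset.univ.filter (fun t => IsMaxI f l t ∧ f p < f t ∧ f t < f r)).card

open Classical in
lemma mcard_lt_left {p q r : α} (hq : IsMaxI f l q) (hpq : f p < f q) (hqr : f q < f r) :
    mcard f l q r < mcard f l p r := by
  apply Finset.card_lt_card
  constructor
  · intro x hx
    simp only [Finset.mem_filter, Finset.mem_univ, true_and] at hx ⊢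
    exact ⟨hx.1, hpq.trans hx.2.1, hx.2.2⟩
  · intro hsub
    have h1 : q ∈ Finset.univ.filter (fun t => IsMaxI f l t ∧ f p < f t ∧ f t < f r) := by
      simp only [Finset.mem_filter, Finset.mem_univ, true_and]
      exact ⟨hq, hpq, hqr⟩
    have h2 := hsub h1
    simp only [Finset.mem_filter, Finset.mem_univ, true_and] at h2
    exact absurd h2.2.1 (lt_irrefl _)

open Classical in
lemma mcard_lt_right {p q r : α} (hq : IsMaxI f l q) (hpq : f p < f q) (hqr : f q < f r) :
    mcard f l p q < mcard f l p r := by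
  apply Finset.card_lt_card
  constructor
  · intro x hx
    simp only [Finset.mem_filter, Finset.mem_univ, true_and] at hx ⊢
    exact ⟨hx.1, hx.2.1, hx.2.2.trans hqr⟩
  · intro hsub
    have h1 : q ∈ Finset.univ.filter (fun t => IsMaxI f l t ∧ f p < f t ∧ f t < f r) := by
      simp only [Finset.mem_filter, Finset.mem_univ, true_and]
      exact ⟨hq, hpq, hqr⟩
    have h2 := hsub h1
    simp only [Finset.mem_filter, Finset.mem_univ, true_and] at h2
    exact absurd h2.2.2 (lt_irrefl _)

lemma betweenAux (hfl : ∀ x : α, f x ≤ l x) (hsand : Sand f l) (hconn : Conn f l) :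
    ∀ n : ℕ, ∀ p q r : α, mcard f l p r = n → IsMaxI f l p → IsMaxI f l q → IsMaxI f l r →
    f p < f q → f q < f r → (p < q ∧ q < r) ∨ (r < q ∧ q < p) := by
  intro n
  induction n using Nat.strong_induction_on with
  | _ n IH =>
  intro p q r hcard hp hq hr hpq hqr
  by_contra hcon
  rw [not_or] at hcon
  have hpqne : p ≠ q := fun h => absurd (h ▸ hpq) (lt_irrefl _)
  have hqrne : q ≠ r := fun h => absurd (h ▸ hqr) (lt_irrefl _)
  have hprne : p ≠ r := fun h => absurd (h ▸ (hpq.trans hqr)) (lt_irrefl _)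
  rcases lt_trichotomy q p with hqp | hqp | hqp
  · rcases lt_trichotomy q r with hqr' | hqr' | hqr'
    · -- q below both
      rcases lt_trichotomy p r with hpr | hpr | hpr
      · -- C1 : q < p < r
        rcases le_or_gt (f r) (l q) with ha | ha
        · have h3 := hsand q p r hqp.le hpr.le (l q) (hfl q) le_rfl ha
            (maxI_lt hq hr hqr).le
          exact absurd h3.2 (not_le.2 (maxI_lt hp hq hpq))
        · obtain ⟨t, ht, hqt, htr⟩ := gapMax hconn hq hr ha
          have hA := IH _ (hcard ▸ mcard_lt_left hq hpq hqr) q t r rfl hq ht hr hqt htr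
          have hB := IH _ (hcard ▸ mcard_lt_right ht (hpq.trans hqt) htr) p q t rfl
            hp hq ht hpq hqt
          rcases hB with ⟨h1, _⟩ | ⟨h1, h2⟩
          · exact absurd h1 (not_lt.2 hqp.le)
          · rcases hA with ⟨h3, _⟩ | ⟨h3, h4⟩
            · exact absurd h3 (not_lt.2 h1.le)
            · exact absurd (((h3.trans h4).trans h2).trans hpr) (lt_irrefl r)
      · exact hprne hpr
      · -- C2 : q < r < p
        rcases le_or_gt (f q) (l p) with ha | ha
        · have h3 := hsand q r p hqr'.le hpr.le (f q) le_rfl (hfl q) hpq.le ha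
          exact absurd h3.1 (not_le.2 hqr)
        · obtain ⟨t, ht, hpt, htq⟩ := gapMax hconn hp hq ha
          have hA := IH _ (hcard ▸ mcard_lt_right hq hpq hqr) p t q rfl hp ht hq hpt htq
          have hB := IH _ (hcard ▸ mcard_lt_left ht hpt (htq.trans hqr)) t q r rfl
            ht hq hr htq hqr
          rcases hB with ⟨h1, h2⟩ | ⟨h1, _⟩
          · rcases hA with ⟨h3, h4⟩ | ⟨h3, h4⟩
            · exact absurd ((h3.trans h4).trans hqp) (lt_irrefl p)
            · exact absurd h3 (not_lt.2 h1.le)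
          · exact absurd h1 (not_lt.2 hqr'.le)
    · exact hqrne hqr'
    · exact hcon.2 ⟨hqr', hqp⟩
  · exact hpqne hqp.symm
  · rcases lt_trichotomy q r with hqr' | hqr' | hqr'
    · exact hcon.1 ⟨hqp, hqr'⟩
    · exact hqrne hqr'
    · -- q above both
      rcases lt_trichotomy p r with hpr | hpr | hpr
      · -- C4 : p < r < q
        rcases le_or_gt (f q) (l p) with ha | ha
        · have h3 := hsand p r q hpr.le hqr'.le (f q) hpq.le ha le_rfl (hfl q)
          exact absurd h3.1 (not_le.2 hqr)
        · obtain ⟨t, ht, hpt, htq⟩ := gapMax hconn hp hq ha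
          have hA := IH _ (hcard ▸ mcard_lt_right hq hpq hqr) p t q rfl hp ht hq hpt htq
          have hB := IH _ (hcard ▸ mcard_lt_left ht hpt (htq.trans hqr)) t q r rfl
            ht hq hr htq hqr
          rcases hB with ⟨h1, h2⟩ | ⟨h1, h2⟩
          · exact absurd h2 (not_lt.2 hqr'.le)
          · rcases hA with ⟨h3, h4⟩ | ⟨h3, h4⟩
            · exact absurd h4 (not_lt.2 h2.le)
            · exact absurd (((h4.trans hpr).trans h1).trans h2) (lt_irrefl t)
      · exact hprne hpr
      · -- C3 : r < p < q
        rcases le_or_gt (f r) (l q) with ha | ha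
        · have h3 := hsand r p q hpr.le hqp.le (l q) ha (maxI_lt hq hr hqr).le
            (hfl q) le_rfl
          exact absurd h3.2 (not_le.2 (maxI_lt hp hq hpq))
        · obtain ⟨t, ht, hqt, htr⟩ := gapMax hconn hq hr ha
          have hA := IH _ (hcard ▸ mcard_lt_left hq hpq hqr) q t r rfl hq ht hr hqt htr
          have hB := IH _ (hcard ▸ mcard_lt_right ht (hpq.trans hqt) htr) p q t rfl
            hp hq ht hpq hqt
          rcases hB with ⟨h1, h2⟩ | ⟨h1, h2⟩
          · rcases hA with ⟨h3, h4⟩ | ⟨h3, h4⟩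
            · exact absurd (((h4.trans hpr).trans h1).trans h2) (lt_irrefl t)
            · exact absurd h4 (not_lt.2 h2.le)
          · exact absurd h2 (not_lt.2 hqp.le)

lemma ascOfBase (hfl : ∀ x : α, f x ≤ l x) (hsand : Sand f l) (hconn : Conn f l)
    {u0 w0 : α} (hu0 : IsMaxI f l u0) (hw0 : IsMaxI f l w0)
    (hu0min : ∀ t, IsMaxI f l t → f u0 ≤ f t)
    (hw0min : ∀ t, IsMaxI f l t → f u0 < f t → f w0 ≤ f t)
    (h01 : f u0 < f w0) (hpos : u0 < w0) : Asc f l := by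
  have hI0 : ∀ t, IsMaxI f l t → f t = f u0 → f t ≤ l t ∧ l t = l u0 := fun t ht he =>
    ⟨hfl t, maxI_eq ht hu0 he⟩
  -- step A: everything with key above u0's is positioned after u0 (and after its block)
  have stepA : ∀ u w, IsMaxI f l u → IsMaxI f l w → f u = f u0 → f u < f w → u < w := by
    intro u w hu hw hue huw
    -- first : u < w0
    have huw0 : u < w0 := by
      rcases lt_trichotomy u w0 with h1 | h1 | h1
      · exact h1
      · exact absurd (h1 ▸ hue ▸ h01) (lt_irrefl _)
      · -- u0 < w0 < u with I(u) = I(u0) : sandwich contradiction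
        exfalso
        have hlu : l u = l u0 := maxI_eq hu hu0 hue
        have h3 := hsand u0 w0 u hpos.le h1.le (f u0) le_rfl (hfl u0)
          hue.le (hue.ge.trans (hfl u))
        exact absurd h3.1 (not_le.2 h01)
    rcases lt_trichotomy (f w0) (f w) with h2 | h2 | h2
    · have hB := betweenAux hfl hsand hconn (mcard f l u w) u w0 w rfl hu hw0 hw
        (hue ▸ h01) h2
      rcases hB with ⟨_, h3⟩ | ⟨_, h3⟩
      · exact huw0.trans h3
      · exact absurd h3 (not_lt.2 huw0.le)
    · -- w in w0's block
      rcases lt_trichotomy u w with h3 | h3 | h3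
      · exact h3
      · exact absurd (h3 ▸ huw) (lt_irrefl _)
      · exfalso
        have hlw : l w = l w0 := maxI_eq hw hw0 h2.symm
        have h4 := hsand w u w0 h3.le huw0.le (f w) le_rfl (hfl w)
          h2.le ((hfl w).trans hlw.le)
        have h5 := hsand w u w0 h3.le huw0.le (l w) (hfl w) le_rfl
          (h2.le.trans (hfl w)) hlw.le
        exact absurd (hw u ⟨h4.1, h5.2⟩).1 (not_le.2 huw)
    · exact absurd (hw0min w hw (hue ▸ huw)) (not_le.2 h2)
  intro u w hu hw huw
  rcases eq_or_lt_of_le (hu0min u hu) with h1 | h1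
  · exact stepA u w hu hw h1.symm huw
  · have h2 : u0 < u := stepA u0 u hu0 hu rfl h1
    have h3 : u0 < w := stepA u0 w hu0 hw rfl (h1.trans huw)
    rcases betweenAux hfl hsand hconn (mcard f l u0 w) u0 u w rfl hu0 hu hw h1
        huw with ⟨_, h4⟩ | ⟨_, h4⟩
    · exact h4
    · exact absurd h4 (not_lt.2 h2.le)

lemma sand_dual (hsand : Sand f l) : Sand (α := αᵒᵈ) f l := by
  intro u v w huv hvw b h1 h2 h3 h4
  exact hsand w v u hvw huv b h3 h4 h1 h2

lemma dichotomy (hfl : ∀ x : α, f x ≤ l x) (hsand : Sand f l) (hconn : Conn f l) :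
    Asc f l ∨ Asc (α := αᵒᵈ) f l := by
  classical
  by_cases hkeys : ∃ u w, IsMaxI f l u ∧ IsMaxI f l w ∧ f u < f w
  · obtain ⟨ue, we, hue, hwe, huwe⟩ := hkeys
    have hne : (Finset.univ.filter (fun t => IsMaxI f l t)).Nonempty :=
      ⟨ue, by simp [hue]⟩
    obtain ⟨u0, hu0mem, hu0min⟩ := Finset.exists_min_image _ f hne
    simp only [Finset.mem_filter, Finset.mem_univ, true_and] at hu0mem
    have hu0min' : ∀ t, IsMaxI f l t → f u0 ≤ f t := fun t ht => hu0min t (by simp [ht])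
    have hSne : (Finset.univ.filter (fun t => IsMaxI f l t ∧ f u0 < f t)).Nonempty := by
      refine ⟨we, by simp [hwe, lt_of_le_of_lt (hu0min' ue hue) huwe]⟩
    obtain ⟨w0, hw0mem, hw0min⟩ := Finset.exists_min_image _ f hSne
    simp only [Finset.mem_filter, Finset.mem_univ, true_and] at hw0mem
    obtain ⟨hw0, h01⟩ := hw0mem
    have hw0min' : ∀ t, IsMaxI f l t → f u0 < f t → f w0 ≤ f t := fun t ht h =>
      hw0min t (by simp [ht, h])
    rcases lt_trichotomy u0 w0 with hpos | hpos | hpos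
    · exact Or.inl (ascOfBase hfl hsand hconn hu0mem hw0 hu0min' hw0min' h01 hpos)
    · exact absurd (hpos ▸ h01) (lt_irrefl _)
    · exact Or.inr (ascOfBase (α := αᵒᵈ) (β := β) hfl (sand_dual hsand) hconn hu0mem hw0
        hu0min' hw0min' h01 hpos)
  · left
    intro u w hu hw huw
    exact absurd ⟨u, w, hu, hw, huw⟩ hkeys

end Orient

section Final
variable [Fintype α] [LinearOrder α] [Fintype β] [LinearOrder β]

theorem core' (f l : α → β) [Nonempty α] (hfl : ∀ x : α, f x ≤ l x)
    (hsand : Sand f l) (hconn : Conn f l) (hasc : Asc f l) :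
    ∃ κ : α → ℕ ×ₗ (ℕ ×ₗ ℕ),
      (∀ u v w : α, ∀ b : β, κ u ≤ κ v → κ v ≤ κ w →
        f u ≤ b → b ≤ l u → f w ≤ b → b ≤ l w → f v ≤ b ∧ b ≤ l v) ∧
      (∀ u w : α, κ u ≤ κ w → ¬ (f w < f u ∧ l w < l u)) := by
  classical
  obtain ⟨t0, ht0, _⟩ := exists_maxI (f := f) (l := l) (Classical.arbitrary α)
  have hne : (Finset.univ.filter (fun t => IsMaxI f l t)).Nonempty := ⟨t0, by simp [ht0]⟩
  obtain ⟨wmin, hwminmem, hwminmin⟩ := Finset.exists_min_image _ f hne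
  obtain ⟨wmax, hwmaxmem, hwmaxmax⟩ := Finset.exists_max_image _ f hne
  simp only [Finset.mem_filter, Finset.mem_univ, true_and] at hwminmem hwmaxmem
  have hwminle : ∀ t, IsMaxI f l t → f wmin ≤ f t := fun t ht => hwminmin t (by simp [ht])
  have hwmaxle : ∀ t, IsMaxI f l t → f t ≤ f wmax := fun t ht => hwmaxmax t (by simp [ht])
  refine ⟨kappaF f l wmin, ?_, ?_⟩
  · intro u v w b huv hvw h1 h2 h3 h4
    exact coreC1 hfl hsand hconn hasc hwminmem hwminle hwmaxmem hwmaxle u v w b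
      huv hvw h1 h2 h3 h4
  · intro u w h hD
    exact coreC2 hfl hsand hconn hasc hwminmem hwminle hwmaxmem hwmaxle u w h hD

theorem core (f l : α → β) (hfl : ∀ x : α, f x ≤ l x)
    (hsand : Sand f l) (hconn : Conn f l) :
    ∃ κ : α → ℕ ×ₗ (ℕ ×ₗ ℕ),
      (∀ u v w : α, ∀ b : β, κ u ≤ κ v → κ v ≤ κ w →
        f u ≤ b → b ≤ l u → f w ≤ b → b ≤ l w → f v ≤ b ∧ b ≤ l v) ∧
      (∀ u w : α, κ u ≤ κ w → ¬ (f w < f u ∧ l w < l u)) := by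
  rcases isEmpty_or_nonempty α with hemp | hne
  · exact ⟨fun x => isEmptyElim x, fun u => isEmptyElim u, fun u => isEmptyElim u⟩
  · rcases dichotomy hfl hsand hconn with hasc | hdesc
    · exact core' f l hfl hsand hconn hasc
    · exact core' (α := αᵒᵈ) (β := β) f l hfl (sand_dual hsand) hconn hdesc

end Final

end SOrderAux

/-- Every finite connected biconvex bipartite graph has a biconvex S-ordering. -/
theorem connected_biconvex_bipartite_exists_sOrdering
    {V : Type*} [Fintype V] (G : SimpleGraph V) (hconn : G.Connected)
    (A B : Set V) (hbip : IsBipartiteWith G A B)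
    (hbiconvex : ∃ (lA : LinearOrder ↥A) (lB : LinearOrder ↥B),
      BiconvexOrdering G A B lA lB) :
    ∃ (lA : LinearOrder ↥A) (lB : LinearOrder ↥B), SOrdering G A B lA lB := by
  classical
  obtain ⟨lA₀, lB, hbc⟩ := hbiconvex
  have hAB : ∀ {v : V}, v ∈ A → v ∈ B → False := by
    intro v hvA hvB
    have hv : v ∈ A ∩ B := ⟨hvA, hvB⟩
    rw [hbip.1] at hv
    exact hv
  by_cases hne : ∀ a : ↥A, ∃ b : ↥B, G.Adj ↑a ↑b
  swap
  · -- some vertex of A has no neighbour: the graph has no edges at all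
    push_neg at hne
    obtain ⟨a₀, ha₀⟩ := hne
    have hnoadj : ∀ v, ¬ G.Adj ↑a₀ v := by
      intro v hv
      rcases hbip.2.2 hv with ⟨h1, h2⟩ | ⟨h1, h2⟩
      · exact ha₀ ⟨v, h2⟩ hv
      · exact hAB a₀.2 h1
    have hnoedge : ∀ u v : V, ¬ G.Adj u v := by
      intro u v huv
      obtain ⟨p⟩ := hconn.preconnected ↑a₀ u
      cases p with
      | nil => exact hnoadj v huv
      | cons h _ => exact hnoadj _ h
    exact ⟨lA₀, lB, hbc, fun ai aj bs br h1 _ _ => absurd h1 (hnoedge _ _)⟩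
  · letI : Fintype ↥A := Fintype.ofFinite _
    letI : Fintype ↥B := Fintype.ofFinite _
    letI := lA₀
    letI := lB
    set N : ↥A → Finset ↥B := fun a => Finset.univ.filter (fun b => G.Adj ↑a ↑b) with hN
    have hNne : ∀ a, (N a).Nonempty := by
      intro a
      obtain ⟨b, hb⟩ := hne a
      exact ⟨b, by simp [hN, hb]⟩
    set f : ↥A → ↥B := fun a => (N a).min' (hNne a) with hf
    set l : ↥A → ↥B := fun a => (N a).max' (hNne a) with hl
    have hadj_iff : ∀ (a : ↥A) (b : ↥B), G.Adj ↑a ↑b ↔ (f a ≤ b ∧ b ≤ l a) := by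
      intro a b
      constructor
      · intro h
        exact ⟨Finset.min'_le _ _ (by simp [hN, h]), Finset.le_max' _ _ (by simp [hN, h])⟩
      · rintro ⟨h1, h2⟩
        have hfadj : G.Adj ↑a ↑(f a) := by
          have := Finset.min'_mem (N a) (hNne a)
          simp only [hN, Finset.mem_filter, Finset.mem_univ, true_and] at this
          exact this
        have hladj : G.Adj ↑a ↑(l a) := by
          have := Finset.max'_mem (N a) (hNne a)
          simp only [hN, Finset.mem_filter, Finset.mem_univ, true_and] at this
          exact this
        exact hbc.1 a (f a) b (l a) h1 h2 hfadj hladj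
    have hfl : ∀ a, f a ≤ l a := fun a => Finset.min'_le _ _ (Finset.max'_mem _ _)
    have hsand : SOrderAux.Sand f l := by
      intro u v w huv hvw b h1 h2 h3 h4
      have hu := (hadj_iff u b).2 ⟨h1, h2⟩
      have hw := (hadj_iff w b).2 ⟨h3, h4⟩
      exact (hadj_iff v b).1 (hbc.2 b u v w huv hvw hu hw)
    have hconn' : SOrderAux.Conn f l := by
      intro u w hlt hall
      set X : Set V :=
        {v | (∀ h : v ∈ A, l ⟨v, h⟩ ≤ l u) ∧ (∀ h : v ∈ B, (⟨v, h⟩ : ↥B) ≤ l u)} with hX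
      have hstep : ∀ v v', G.Adj v v' → v ∈ X → v' ∈ X := by
        intro v v' hvv' hvX
        rcases hbip.2.2 hvv' with ⟨hvA, hv'B⟩ | ⟨hvB, hv'A⟩
        · refine ⟨fun h => (hAB h hv'B).elim, fun h => ?_⟩
          have hadj := (hadj_iff ⟨v, hvA⟩ ⟨v', h⟩).1 hvv'
          exact hadj.2.trans (hvX.1 hvA)
        · rcases hall ⟨v', hv'A⟩ with hcase | hcase
          · exact ⟨fun h => hcase, fun h => (hAB hv'A h).elim⟩
          · exfalso
            have hadj := (hadj_iff ⟨v', hv'A⟩ ⟨v, hvB⟩).1 hvv'.symm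
            have hb1 : f w ≤ (⟨v, hvB⟩ : ↥B) := hcase.trans hadj.1
            have hb2 : (⟨v, hvB⟩ : ↥B) ≤ l u := hvX.2 hvB
            exact absurd (hb1.trans hb2) (not_le.2 hlt)
      have hwalk : ∀ {x y : V} (_ : G.Walk x y), x ∈ X → y ∈ X := by
        intro x y p
        induction p with
        | nil => exact id
        | cons h _ ih => exact fun hx => ih (hstep _ _ h hx)
      have huX : (↑u : V) ∈ X := ⟨fun h => le_rfl, fun h => (hAB u.2 h).elim⟩
      have hwX : (↑w : V) ∉ X := by
        intro hX2
        exact absurd (hX2.1 w.2) (not_le.2 (lt_of_lt_of_le hlt (hfl w)))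
      obtain ⟨p⟩ := hconn.preconnected ↑u ↑w
      exact hwX (hwalk p huX)
    obtain ⟨κ, hC1, hC2⟩ := SOrderAux.core f l hfl hsand hconn'
    set e : ↥A → (ℕ ×ₗ (ℕ ×ₗ ℕ)) ×ₗ ↥A := fun a => toLex (κ a, a) with he
    have hinj : Function.Injective e := by
      intro a b h
      have h2 := congrArg (fun p => (ofLex p).2) h
      simpa [he] using h2
    have hle' : ∀ {x y : ↥A}, (LinearOrder.lift' e hinj).le x y → κ x ≤ κ y := by
      intro x y h
      have h2 : e x ≤ e y := h
      rcases (Prod.Lex.le_iff).1 h2 with h3 | ⟨h3, _⟩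
      · exact h3.le
      · exact h3.le
    have hlt' : ∀ {x y : ↥A}, (LinearOrder.lift' e hinj).lt x y → κ x ≤ κ y := by
      intro x y h
      have h2 : e x < e y := h
      exact hle' h2.le
    refine ⟨LinearOrder.lift' e hinj, lB, ⟨hbc.1, ?_⟩, ?_⟩
    · intro b x y z h1 h2 h3 h4
      refine (hadj_iff y b).2 ?_
      exact hC1 x y z b (hle' h1) (hle' h2)
        ((hadj_iff x b).1 h3).1 ((hadj_iff x b).1 h3).2
        ((hadj_iff z b).1 h4).1 ((hadj_iff z b).1 h4).2
    · intro ai aj bs br h1 h2 hcross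
      rcases hcross with ⟨hlt, hblt⟩ | ⟨hlt, hblt⟩
      · have hk : κ ai ≤ κ aj := hlt' hlt
        have hbrbs : br ≤ bs := le_of_lt hblt
        by_cases hc1 : f ai ≤ br
        · exact Or.inl ((hadj_iff ai br).2 ⟨hc1, hbrbs.trans ((hadj_iff ai bs).1 h1).2⟩)
        · by_cases hc2 : bs ≤ l aj
          · exact Or.inr ((hadj_iff aj bs).2
              ⟨((hadj_iff aj br).1 h2).1.trans hbrbs, hc2⟩)
          · exfalso
            refine hC2 ai aj hk ⟨?_, ?_⟩
            · exact lt_of_le_of_lt ((hadj_iff aj br).1 h2).1 (not_le.1 hc1)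
            · exact lt_of_lt_of_le (not_le.1 hc2) ((hadj_iff ai bs).1 h1).2
      · have hk : κ aj ≤ κ ai := hlt' hlt
        have hbsbr : bs ≤ br := le_of_lt hblt
        by_cases hc1 : f aj ≤ bs
        · exact Or.inr ((hadj_iff aj bs).2 ⟨hc1, hbsbr.trans ((hadj_iff aj br).1 h2).2⟩)
        · by_cases hc2 : br ≤ l ai
          · exact Or.inl ((hadj_iff ai br).2
              ⟨((hadj_iff ai bs).1 h1).1.trans hbsbr, hc2⟩)
          · exfalso
            refine hC2 aj ai hk ⟨?_, ?_⟩
            · exact lt_of_le_of_lt ((hadj_iff ai bs).1 h1).1 (not_le.1 hc1)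
            · exact lt_of_lt_of_le (not_le.1 hc2) ((hadj_iff aj br).1 h2).2
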